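/- Let n ≥ 1, x > 0 and w > 0. Then the infimum of f over Λ(w) = {v ∈ ℝⁿ : v_i ≥ 0 for all i, Σ_{i=1}^n v_i = w} equals the infimum of f over the ℓ¹-sphere {v ∈ ℝⁿ : ‖v‖₁ = w}; moreover, if v minimizes f over {v : ‖v‖₁ = w} then (|v_1|,…,|v_n|) ∈ Λ(w) minimizes f over Λ(w) with the same value. -/

import Mathlib

open Finset

/-- `f v = Σ_{1 ≤ l ≤ k ≤ n} (x − Σ_{i=l}^{k} v_i)⁺` (0-indexed over `Fin n`). -/
noncomputable def f (n : ℕ) (x : ℝ) (v : Fin n → ℝ) : ℝ :=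
  ∑ l : Fin n, ∑ k : Fin n,
    if l ≤ k then max (x - ∑ i ∈ Finset.Icc l k, v i) 0 else 0

/-- `Λ(w)`: nonnegative vectors with coordinate sum `w`. -/
def Lambda (n : ℕ) (w : ℝ) : Set (Fin n → ℝ) :=
  {v | (∀ i, 0 ≤ v i) ∧ ∑ i, v i = w}

lemma f_nonneg (n : ℕ) (x : ℝ) (v : Fin n → ℝ) : 0 ≤ f n x v := by
  apply Finset.sum_nonneg
  intro l _
  apply Finset.sum_nonneg
  intro k _
  split
  · exact le_max_right _ _
  · exact le_rfl

lemma f_abs_le (n : ℕ) (x : ℝ) (v : Fin n → ℝ) :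
    f n x (fun i => |v i|) ≤ f n x v := by
  apply Finset.sum_le_sum
  intro l _
  apply Finset.sum_le_sum
  intro k _
  split
  · refine max_le_max (sub_le_sub_left ?_ x) le_rfl
    exact Finset.sum_le_sum fun i _ => le_abs_self (v i)
  · exact le_rfl

/-- The infimum of `f` over `Λ(w)` equals its infimum over the ℓ¹-sphere of radius `w`;
moreover a minimizer `v` over the ℓ¹-sphere yields the minimizer `|v| ∈ Λ(w)` of the
same value. -/
theorem statement11 (n : ℕ) (hn : 1 ≤ n) (x w : ℝ) (hx : 0 < x) (hw : 0 < w) :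
    sInf (f n x '' Lambda n w) =
      sInf (f n x '' {v : Fin n → ℝ | ∑ i, |v i| = w}) ∧
    ∀ v : Fin n → ℝ, (∑ i, |v i| = w) →
      (∀ u : Fin n → ℝ, (∑ i, |u i| = w) → f n x v ≤ f n x u) →
      ((fun i => |v i|) ∈ Lambda n w ∧
        (∀ u ∈ Lambda n w, f n x (fun i => |v i|) ≤ f n x u) ∧
        f n x (fun i => |v i|) = f n x v) := by
  have hsub : ∀ u ∈ Lambda n w, ∑ i, |u i| = w := by
    intro u hu
    rw [← hu.2]
    exact Finset.sum_congr rfl fun i _ => abs_of_nonneg (hu.1 i)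
  have habsmem : ∀ v : Fin n → ℝ, (∑ i, |v i| = w) → (fun i => |v i|) ∈ Lambda n w := by
    intro v hv
    exact ⟨fun i => abs_nonneg _, hv⟩
  constructor
  · -- equality of infima
    have hne : (Lambda n w).Nonempty := by
      refine ⟨fun _ => w / n, fun i => by positivity, ?_⟩
      rw [Finset.sum_const, Finset.card_univ, Fintype.card_fin, nsmul_eq_mul]
      field_simp
    have hbdd : BddBelow (f n x '' {v : Fin n → ℝ | ∑ i, |v i| = w}) := by
      refine ⟨0, fun y hy => ?_⟩
      obtain ⟨u, -, rfl⟩ := hy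
      exact f_nonneg n x u
    have hbdd' : BddBelow (f n x '' Lambda n w) := by
      refine ⟨0, fun y hy => ?_⟩
      obtain ⟨u, -, rfl⟩ := hy
      exact f_nonneg n x u
    apply le_antisymm
    · obtain ⟨v0, hv0⟩ := hne
      refine le_csInf ⟨f n x v0, v0, hsub v0 hv0, rfl⟩ ?_
      rintro y ⟨v, hv, rfl⟩
      exact csInf_le_of_le hbdd' ⟨fun i => |v i|, habsmem v hv, rfl⟩ (f_abs_le n x v)
    · exact csInf_le_csInf hbdd
        (by obtain ⟨v, hv⟩ := hne; exact ⟨f n x v, v, hv, rfl⟩)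
        (Set.image_mono fun u hu => hsub u hu)
  · intro v hv hmin
    have h1 : f n x (fun i => |v i|) ≤ f n x v := f_abs_le n x v
    have h2 : f n x v ≤ f n x (fun i => |v i|) := by
      apply hmin
      simpa [abs_of_nonneg (abs_nonneg _)] using hv
    refine ⟨habsmem v hv, ?_, le_antisymm h1 h2⟩
    intro u hu
    exact h1.trans (hmin u (hsub u hu))
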